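/- arXiv:2411.11434 — 2 statements merged into one kernel-verified Lean document; each statement's English description precedes it below -/
import Mathlib

section
/- Define ρ_s(x) = exp(−π‖x/s‖²) for x ∈ ℝⁿ and s > 0 (with ρ = ρ₁). For a unit vector w ∈ ℝⁿ, write ỹ = ⟨y, w⟩ and y⊥ = y − ỹ·w. Then with γ' = √(β²+γ²), for every y ∈ ℝⁿ: ρ(y⊥) · Σ_{k∈ℤ} ρ_{γ'}(k) · ρ_{β/γ'}(ỹ − kγ/γ'²) = ρ(y) · Σ_{k∈ℤ} ρ_β(k − γ⟨w, y⟩). -/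
open scoped InnerProductSpace

/-- with ρ_s(x) = exp(−π‖x/s‖²), w a unit vector, ỹ = ⟨y,w⟩,
y⊥ = y − ỹ·w, γ' = √(β²+γ²):
ρ(y⊥) · Σ_{k∈ℤ} ρ_{γ'}(k) · ρ_{β/γ'}(ỹ − kγ/γ'²) = ρ(y) · Σ_{k∈ℤ} ρ_β(k − γ⟨w,y⟩). -/
theorem stmt_2 (n : ℕ) (β γ γ' : ℝ) (hβ : 0 < β) (hγ : 0 < γ)
    (hγ' : γ' = Real.sqrt (β ^ 2 + γ ^ 2))
    (w : EuclideanSpace ℝ (Fin n)) (hw : ‖w‖ = 1)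
    (y : EuclideanSpace ℝ (Fin n)) :
    Real.exp (-Real.pi * ‖y - ⟪y, w⟫_ℝ • w‖ ^ 2) *
        ∑' k : ℤ,
          Real.exp (-Real.pi * ((k : ℝ) / γ') ^ 2) *
            Real.exp (-Real.pi * ((⟪y, w⟫_ℝ - (k : ℝ) * γ / γ' ^ 2) / (β / γ')) ^ 2)
      = Real.exp (-Real.pi * ‖y‖ ^ 2) *
          ∑' k : ℤ, Real.exp (-Real.pi * (((k : ℝ) - γ * ⟪w, y⟫_ℝ) / β) ^ 2) := by
  set t : ℝ := ⟪y, w⟫_ℝ with ht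
  have hsym : ⟪w, y⟫_ℝ = t := real_inner_comm y w
  have hsum : (0:ℝ) ≤ β ^ 2 + γ ^ 2 := by positivity
  have hγ'sq : γ' ^ 2 = β ^ 2 + γ ^ 2 := by
    rw [hγ', Real.sq_sqrt hsum]
  have hγ'pos : 0 < γ' := by
    rw [hγ']; positivity
  have hγ'ne : γ' ≠ 0 := ne_of_gt hγ'pos
  have hβne : β ≠ 0 := ne_of_gt hβ
  -- termwise identity
  have key : ∀ k : ℤ,
      Real.exp (-Real.pi * ((k : ℝ) / γ') ^ 2) *
        Real.exp (-Real.pi * ((t - (k : ℝ) * γ / γ' ^ 2) / (β / γ')) ^ 2)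
      = Real.exp (-Real.pi * t ^ 2) *
        Real.exp (-Real.pi * (((k : ℝ) - γ * ⟪w, y⟫_ℝ) / β) ^ 2) := by
    intro k
    rw [hsym, ← Real.exp_add, ← Real.exp_add]
    congr 1
    have : ((k : ℝ) / γ') ^ 2 + ((t - (k : ℝ) * γ / γ' ^ 2) / (β / γ')) ^ 2
        = t ^ 2 + (((k : ℝ) - γ * t) / β) ^ 2 := by
      simp only [div_pow, hγ'sq]
      have hs : (0:ℝ) < β ^ 2 + γ ^ 2 := by positivity
      field_simp
      ring
    linear_combination (-Real.pi) * this
  have hnorm : ‖y - t • w‖ ^ 2 = ‖y‖ ^ 2 - t ^ 2 := by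
    rw [@norm_sub_sq_real, real_inner_smul_right, norm_smul, hw]
    simp [← ht, mul_pow]
    ring
  calc
    Real.exp (-Real.pi * ‖y - t • w‖ ^ 2) *
        ∑' k : ℤ, Real.exp (-Real.pi * ((k : ℝ) / γ') ^ 2) *
          Real.exp (-Real.pi * ((t - (k : ℝ) * γ / γ' ^ 2) / (β / γ')) ^ 2)
        = Real.exp (-Real.pi * ‖y - t • w‖ ^ 2) *
        ∑' k : ℤ, Real.exp (-Real.pi * t ^ 2) *
          Real.exp (-Real.pi * (((k : ℝ) - γ * ⟪w, y⟫_ℝ) / β) ^ 2) := by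
          congr 1; exact tsum_congr key
    _ = (Real.exp (-Real.pi * ‖y - t • w‖ ^ 2) * Real.exp (-Real.pi * t ^ 2)) *
        ∑' k : ℤ, Real.exp (-Real.pi * (((k : ℝ) - γ * ⟪w, y⟫_ℝ) / β) ^ 2) := by
          rw [tsum_mul_left]; ring
    _ = Real.exp (-Real.pi * ‖y‖ ^ 2) *
        ∑' k : ℤ, Real.exp (-Real.pi * (((k : ℝ) - γ * ⟪w, y⟫_ℝ) / β) ^ 2) := by
          rw [← Real.exp_add, hnorm]
          congr 2; ring
end

section
/- The one-dimensional marginal of H_{w,β,γ} in the direction w has density proportional to Σ_{k∈ℤ} exp(−π k²/(β²+γ²)) · exp(−π (β²+γ²)/β² · (t − kγ/(β²+γ²))²), i.e., it is a mixture of Gaussians with means kγ/(β²+γ²) and standard deviation parameter β/√(β²+γ²) weighted by exp(−πk²/(β²+γ²)). -/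
open scoped InnerProductSpace
open MeasureTheory Real
open scoped ENNReal

lemma aux_summable (β γ : ℝ) (hβ : 0 < β) (t : ℝ) :
    Summable fun k : ℤ => Real.exp (-Real.pi * (((k : ℝ) - γ * t) / β) ^ 2) := by
  refine (HurwitzKernelBounds.summable_f_int 0 (-(γ * t)) (t := 1/β^2) (by positivity)).congr
    fun k => ?_
  simp only [HurwitzKernelBounds.f_int, pow_zero, one_mul]
  congr 1
  ring

lemma aux_gauss (β γ : ℝ) (hβ : 0 < β) (hγ : 0 < γ) (t : ℝ) (k : ℤ) :
    Real.exp (-Real.pi * (k : ℝ) ^ 2 / (β ^ 2 + γ ^ 2)) *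
      Real.exp (-Real.pi * ((β ^ 2 + γ ^ 2) / β ^ 2) *
        (t - (k : ℝ) * γ / (β ^ 2 + γ ^ 2)) ^ 2)
    = Real.exp (-Real.pi * t ^ 2) * Real.exp (-Real.pi * (((k : ℝ) - γ * t) / β) ^ 2) := by
  rw [← Real.exp_add, ← Real.exp_add]
  congr 1
  have h1 : β ^ 2 + γ ^ 2 ≠ 0 := by positivity
  have h2 : β ≠ 0 := ne_of_gt hβ
  field_simp
  ring

lemma aux_map_fst {α β' : Type*} [MeasurableSpace α] [MeasurableSpace β']
    (μ : Measure α) (ν : Measure β') [SigmaFinite μ] [SigmaFinite ν]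
    (f : α → ℝ≥0∞) (h : β' → ℝ≥0∞) (hf : Measurable f) (hh : Measurable h) :
    Measure.map Prod.fst ((μ.prod ν).withDensity fun p => f p.1 * h p.2)
      = μ.withDensity fun t => f t * ∫⁻ z, h z ∂ν := by
  ext s hs
  rw [Measure.map_apply measurable_fst hs,
    withDensity_apply _ (hs.preimage measurable_fst), withDensity_apply _ hs]
  have hp : (Prod.fst ⁻¹' s : Set (α × β')) = s ×ˢ Set.univ := by
    ext p; simp
  rw [hp, ← Measure.restrict_prod_eq_prod_univ,
    lintegral_prod_mul hf.aemeasurable hh.aemeasurable, lintegral_mul_const _ hf]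

lemma aux_map_wd {α β : Type*} [MeasurableSpace α] [MeasurableSpace β]
    {μ : Measure α} {ν : Measure β} {T : α → β} (hT : MeasurePreserving T μ ν)
    {F : β → ℝ≥0∞} (hF : Measurable F) :
    Measure.map T (μ.withDensity (F ∘ T)) = ν.withDensity F := by
  ext s hs
  rw [Measure.map_apply hT.measurable hs,
    withDensity_apply _ (hs.preimage hT.measurable), withDensity_apply _ hs]
  exact hT.setLIntegral_comp_preimage hs hF

/-- the one-dimensional marginal of H_{w,β,γ} in direction w
(the pushforward under y ↦ ⟨y,w⟩) has density proportional to
Σ_{k∈ℤ} exp(−πk²/(β²+γ²)) · exp(−π·(β²+γ²)/β² · (t − kγ/(β²+γ²))²). -/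
theorem stmt_5 (n : ℕ) (β γ : ℝ) (hβ : 0 < β) (hγ : 0 < γ)
    (w : EuclideanSpace ℝ (Fin n)) (hw : ‖w‖ = 1)
    (μ : Measure (EuclideanSpace ℝ (Fin n))) (c : ℝ) (hc : 0 < c)
    (hμ : μ = volume.withDensity fun y => ENNReal.ofReal
      (c * (Real.exp (-Real.pi * ‖y‖ ^ 2) *
        ∑' k : ℤ, Real.exp (-Real.pi * (((k : ℝ) - γ * ⟪w, y⟫_ℝ) / β) ^ 2))))
    (hprob : IsProbabilityMeasure μ) :
    ∃ c' : ℝ, 0 < c' ∧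
      Measure.map (fun y => ⟪y, w⟫_ℝ) μ
        = (volume : Measure ℝ).withDensity fun t => ENNReal.ofReal
            (c' * ∑' k : ℤ,
              Real.exp (-Real.pi * (k : ℝ) ^ 2 / (β ^ 2 + γ ^ 2)) *
                Real.exp (-Real.pi * ((β ^ 2 + γ ^ 2) / β ^ 2) *
                  (t - (k : ℝ) * γ / (β ^ 2 + γ ^ 2)) ^ 2)) := by
  classical
  have hn : n ≠ 0 := by
    rintro rfl
    rw [Subsingleton.elim w 0, norm_zero] at hw
    exact one_ne_zero hw.symm
  set i₀ : Fin n := ⟨0, Nat.pos_of_ne_zero hn⟩ with hi₀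
  have hcard : Module.finrank ℝ (EuclideanSpace ℝ (Fin n)) = Fintype.card (Fin n) := by
    simp [finrank_euclideanSpace]
  have horth : Orthonormal ℝ (Set.restrict {i₀} (fun _ : Fin n => w)) := by
    constructor
    · intro i; exact hw
    · intro i j hij; exact absurd (Subsingleton.elim i j) hij
  obtain ⟨b, hb⟩ := horth.exists_orthonormalBasis_extension_of_card_eq hcard
  have hbw : b i₀ = w := hb i₀ rfl
  set p : Fin n → Prop := fun i => i = i₀ with hp
  letI : Unique {i : Fin n // p i} := ⟨⟨⟨i₀, rfl⟩⟩, by rintro ⟨j, hj⟩; exact Subtype.ext hj⟩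
  set ν : Measure ({i : Fin n // ¬ p i} → ℝ) :=
    Measure.pi fun _ => (volume : Measure ℝ) with hν
  set T : EuclideanSpace ℝ (Fin n) → ℝ × ({i : Fin n // ¬ p i} → ℝ) :=
    fun y => (b.repr y i₀, fun i => b.repr y i.1) with hTdef
  have hT : MeasurePreserving T volume ((volume : Measure ℝ).prod ν) := by
    have h1 := b.measurePreserving_repr
    have h2 := EuclideanSpace.volume_preserving_symm_measurableEquiv_toLp (Fin n)
    have h3 := measurePreserving_piEquivPiSubtypeProd (fun _ : Fin n => (volume : Measure ℝ)) p
    have h4 := (measurePreserving_funUnique (volume : Measure ℝ) {i : Fin n // p i}).prod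
      (MeasurePreserving.id ν)
    have hTeq : T = (Prod.map (MeasurableEquiv.funUnique {i : Fin n // p i} ℝ) id) ∘
        (MeasurableEquiv.piEquivPiSubtypeProd (fun _ : Fin n => ℝ) p) ∘
        (MeasurableEquiv.toLp 2 (Fin n → ℝ)).symm ∘ b.repr := by
      funext y
      simp only [Function.comp_apply,
        MeasurableEquiv.coe_mk, MeasurableEquiv.funUnique,
        MeasurableEquiv.piEquivPiSubtypeProd, Equiv.funUnique,
        Equiv.piEquivPiSubtypeProd, Prod.map, hTdef,
        MeasurableEquiv.piUnique, Equiv.piUnique]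
      rfl
    rw [hTeq]
    refine MeasurePreserving.comp ?_ (h3.comp (h2.comp h1))
    convert h4 using 2
    congr!
  -- densities
  set g₁ : ℝ → ℝ≥0∞ := fun t => ENNReal.ofReal c * ENNReal.ofReal (Real.exp (-Real.pi * t ^ 2)) *
      ∑' k : ℤ, ENNReal.ofReal (Real.exp (-Real.pi * (((k : ℝ) - γ * t) / β) ^ 2)) with hg₁
  set h₁ : ({i : Fin n // ¬ p i} → ℝ) → ℝ≥0∞ :=
      fun z => ENNReal.ofReal (Real.exp (-Real.pi * ∑ i, (z i) ^ 2)) with hh₁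
  have hg₁m : Measurable g₁ := by
    refine (measurable_const.fun_mul ?_).fun_mul ?_
    · exact (by fun_prop : Measurable fun t : ℝ => Real.exp (-Real.pi * t ^ 2)).ennreal_ofReal
    · exact Measurable.ennreal_tsum fun k =>
        (by fun_prop : Measurable fun t : ℝ =>
          Real.exp (-Real.pi * (((k : ℝ) - γ * t) / β) ^ 2)).ennreal_ofReal
  have hh₁m : Measurable h₁ := by
    refine Measurable.ennreal_ofReal (Real.measurable_exp.comp ?_)
    exact (measurable_const.mul (Finset.measurable_sum _ fun i _ =>
      (measurable_pi_apply i).pow_const 2))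
  have hFm : Measurable (fun q : ℝ × ({i : Fin n // ¬ p i} → ℝ) => g₁ q.1 * h₁ q.2) :=
    (hg₁m.comp measurable_fst).mul (hh₁m.comp measurable_snd)
  -- density identity
  have hDF : (fun y : EuclideanSpace ℝ (Fin n) => ENNReal.ofReal
      (c * (Real.exp (-Real.pi * ‖y‖ ^ 2) *
        ∑' k : ℤ, Real.exp (-Real.pi * (((k : ℝ) - γ * ⟪w, y⟫_ℝ) / β) ^ 2))))
      = (fun q : ℝ × ({i : Fin n // ¬ p i} → ℝ) => g₁ q.1 * h₁ q.2) ∘ T := by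
    funext y
    have ht : ⟪w, y⟫_ℝ = b.repr y i₀ := by rw [← hbw, b.repr_apply_apply]
    have hnorm : ‖y‖ ^ 2 = (b.repr y i₀) ^ 2 + ∑ i : {i : Fin n // ¬ p i}, (b.repr y i.1) ^ 2 := by
      have h1 : ‖y‖ = ‖b.repr y‖ := (b.repr.norm_map y).symm
      rw [h1, EuclideanSpace.norm_eq, Real.sq_sqrt (by positivity)]
      simp_rw [Real.norm_eq_abs, sq_abs]
      rw [← Finset.add_sum_erase Finset.univ _ (Finset.mem_univ i₀)]
      congr 1
      exact Finset.sum_subtype _ (fun i => by simp [hp, Finset.mem_erase, eq_comm]) _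
    have hS := aux_summable β γ hβ (b.repr y i₀)
    have hSnn : 0 ≤ ∑' k : ℤ, Real.exp (-Real.pi * (((k : ℝ) - γ * (b.repr y i₀)) / β) ^ 2) :=
      tsum_nonneg fun k => (Real.exp_pos _).le
    simp only [Function.comp_apply, hTdef, hg₁, hh₁]
    rw [ht, hnorm]
    have e1 : Real.exp (-Real.pi * ((b.repr y i₀) ^ 2 +
          ∑ i : {i : Fin n // ¬ p i}, (b.repr y i.1) ^ 2))
        = Real.exp (-Real.pi * (b.repr y i₀) ^ 2) *
          Real.exp (-Real.pi * ∑ i : {i : Fin n // ¬ p i}, (b.repr y i.1) ^ 2) := by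
      rw [← Real.exp_add]; ring_nf
    rw [e1]
    rw [show c * (Real.exp (-Real.pi * (b.repr y i₀) ^ 2) *
            Real.exp (-Real.pi * ∑ i : {i : Fin n // ¬ p i}, (b.repr y i.1) ^ 2) *
            ∑' k : ℤ, Real.exp (-Real.pi * (((k : ℝ) - γ * (b.repr y i₀)) / β) ^ 2))
        = c * (Real.exp (-Real.pi * (b.repr y i₀) ^ 2) *
            ∑' k : ℤ, Real.exp (-Real.pi * (((k : ℝ) - γ * (b.repr y i₀)) / β) ^ 2)) *
            Real.exp (-Real.pi * ∑ i : {i : Fin n // ¬ p i}, (b.repr y i.1) ^ 2) from by ring]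
    rw [ENNReal.ofReal_mul (by positivity), ENNReal.ofReal_mul hc.le,
      ENNReal.ofReal_mul (Real.exp_pos _).le,
      ENNReal.ofReal_tsum_of_nonneg (fun k => (Real.exp_pos _).le) hS]
    ring
  -- the inner-product map as fst ∘ T
  have hIP : (fun y : EuclideanSpace ℝ (Fin n) => ⟪y, w⟫_ℝ) = Prod.fst ∘ T := by
    funext y
    simp only [Function.comp_apply, hTdef]
    rw [b.repr_apply_apply, hbw, real_inner_comm]
  set I := ∫⁻ z, h₁ z ∂ν with hIdef
  have hmass : (∫⁻ t, g₁ t) * I = 1 := by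
    have h0 : μ Set.univ = 1 := hprob.measure_univ
    rw [hμ, withDensity_apply _ MeasurableSet.univ, Measure.restrict_univ] at h0
    calc (∫⁻ t, g₁ t) * I
        = ∫⁻ q, g₁ q.1 * h₁ q.2 ∂((volume : Measure ℝ).prod ν) :=
          (lintegral_prod_mul hg₁m.aemeasurable hh₁m.aemeasurable).symm
      _ = ∫⁻ y, ((fun q : ℝ × ({i : Fin n // ¬ p i} → ℝ) => g₁ q.1 * h₁ q.2) ∘ T) y ∂volume :=
          (hT.lintegral_comp hFm).symm
      _ = 1 := by rw [← hDF]; exact h0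
  have hI0 : I ≠ 0 := fun h => by rw [h, mul_zero] at hmass; exact zero_ne_one hmass
  have hItop : I ≠ ⊤ := by
    intro h
    rw [h] at hmass
    rcases eq_or_ne (∫⁻ t, g₁ t) 0 with h' | h'
    · rw [h', zero_mul] at hmass; exact zero_ne_one hmass
    · rw [ENNReal.mul_top h'] at hmass; exact (by simp : (⊤ : ℝ≥0∞) ≠ 1) hmass
  refine ⟨c * I.toReal, mul_pos hc (ENNReal.toReal_pos hI0 hItop), ?_⟩
  rw [hμ, hDF, hIP, ← Measure.map_map measurable_fst hT.measurable,
    aux_map_wd hT hFm, aux_map_fst _ _ g₁ h₁ hg₁m hh₁m, ← hIdef]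
  congr 1
  funext t
  have hS := aux_summable β γ hβ t
  have hSnn : 0 ≤ ∑' k : ℤ, Real.exp (-Real.pi * (((k : ℝ) - γ * t) / β) ^ 2) :=
    tsum_nonneg fun k => (Real.exp_pos _).le
  rw [tsum_congr (fun k : ℤ => aux_gauss β γ hβ hγ t k), tsum_mul_left]
  rw [show c * I.toReal * (Real.exp (-Real.pi * t ^ 2) *
        ∑' k : ℤ, Real.exp (-Real.pi * (((k : ℝ) - γ * t) / β) ^ 2))
      = c * (Real.exp (-Real.pi * t ^ 2) *
        ∑' k : ℤ, Real.exp (-Real.pi * (((k : ℝ) - γ * t) / β) ^ 2)) * I.toReal from by ring]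
  rw [ENNReal.ofReal_mul (by positivity), ENNReal.ofReal_mul hc.le,
    ENNReal.ofReal_mul (Real.exp_pos _).le,
    ENNReal.ofReal_tsum_of_nonneg (fun k => (Real.exp_pos _).le) hS,
    ENNReal.ofReal_toReal hItop, hg₁]
  ring
end
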